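/- For all integers n ≥ 2 and k with 1 ≤ k ≤ ((n−2)/2)², setting m = 2⌊√k⌋ + 2 and l = ⌊n/m⌋, one has m ≤ n, every edge of a convex-position straight-line drawing of K_m has at most ⌊√k⌋² ≤ k crossings, and l·C(m,2) ≥ n·√k/8. -/

import Mathlib

set_option maxHeartbeats 1000000

/-- Arithmetic core of the construction showing `max S_k(K_n) = Ω(n√k)`:
for `2 ≤ n` and `1 ≤ k ≤ ((n−2)/2)²`, with `m = 2⌊√k⌋ + 2` and `l = ⌊n/m⌋`, one has
`m ≤ n`, every edge of a convex-position straight-line drawing of `K m` has at most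
`⌊√k⌋² ≤ k` crossings, and `l·C(m,2) ≥ n·√k/8`. -/

theorem stmt6 (n k : ℕ) (hn : 2 ≤ n) (hk : 1 ≤ k)
    (hk2 : (k : ℝ) ≤ (((n : ℝ) - 2) / 2) ^ 2)
    (m l : ℕ) (hm : m = 2 * Nat.sqrt k + 2) (hl : l = n / m) :
    m ≤ n ∧ Nat.sqrt k ^ 2 ≤ k ∧
    (∀ f : Fin m → ℝ × ℝ, Function.Injective f →
      (∀ i : Fin m, f i ∉ convexHull ℝ (f '' {j | j ≠ i})) →
      ∀ p q : Fin m, p ≠ q →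
        Set.ncard {e : Fin m × Fin m | e.1 < e.2 ∧ ¬(e = (p, q) ∨ e = (q, p)) ∧
            (openSegment ℝ (f e.1) (f e.2) ∩ openSegment ℝ (f p) (f q)).Nonempty}
          ≤ Nat.sqrt k ^ 2) ∧
    (n : ℝ) * Real.sqrt k / 8 ≤ (l * m.choose 2 : ℝ) := by
  subst hm hl
  set s := Nat.sqrt k with hs
  have hsk : (s : ℝ) ^ 2 ≤ (k : ℝ) := by exact_mod_cast Nat.sqrt_le' k
  have hn2 : (0:ℝ) ≤ ((n:ℝ) - 2) / 2 := by
    have : (2:ℝ) ≤ n := by exact_mod_cast hn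
    linarith
  have hsle : (s : ℝ) ≤ ((n:ℝ) - 2) / 2 := by
    nlinarith [hsk.trans hk2, Nat.cast_nonneg (α := ℝ) s]
  have hmn : 2 * s + 2 ≤ n := by
    have : ((2 * s + 2 : ℕ) : ℝ) ≤ (n : ℝ) := by push_cast; linarith
    exact_mod_cast this
  refine ⟨hmn, Nat.sqrt_le' k, ?_, ?_⟩
  · -- geometry
    intro f hinj hconv p q hpq
    classical
    set P := f p with hP
    set Q := f q with hQ
    set L : ℝ × ℝ → ℝ := fun x => (Q.1 - P.1) * (x.2 - P.2) - (Q.2 - P.2) * (x.1 - P.1)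
      with hL
    have hLP : L P = 0 := by simp only [hL]; ring
    have hLQ : L Q = 0 := by simp only [hL]; ring
    have hLcomb : ∀ (a b : ℝ × ℝ) (u v : ℝ), u + v = 1 →
        L (u • a + v • b) = u * L a + v * L b := by
      intro a b u v huv
      have hv : v = 1 - u := by linarith
      subst hv
      simp only [hL, Prod.fst_add, Prod.snd_add, Prod.smul_fst, Prod.smul_snd, smul_eq_mul]
      ring
    have hPQ : P ≠ Q := fun h => hpq (hinj h)
    have hwbtw : ∀ a b c : Fin (2 * s + 2), a ≠ c → b ≠ c →
        Wbtw ℝ (f a) (f c) (f b) → False := by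
      intro a b c hac hbc hw
      apply hconv c
      have h1 : f c ∈ segment ℝ (f a) (f b) := mem_segment_iff_wbtw.mpr hw
      have h2 : segment ℝ (f a) (f b) = convexHull ℝ {f a, f b} := (convexHull_pair _ _).symm
      refine convexHull_mono ?_ (h2 ▸ h1)
      rintro x (rfl | rfl)
      · exact ⟨a, hac, rfl⟩
      · exact ⟨b, hbc, rfl⟩
    have hnc : ∀ i : Fin (2 * s + 2), i ≠ p → i ≠ q → L (f i) ≠ 0 := by
      intro i hip hiq h0
      have h2 : (Q.1 - P.1) * ((f i).2 - P.2) = (Q.2 - P.2) * ((f i).1 - P.1) := by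
        simp only [hL] at h0; linarith
      have hcol : Collinear ℝ ({P, Q, f i} : Set (ℝ × ℝ)) := by
        rw [collinear_iff_exists_forall_eq_smul_vadd]
        refine ⟨P, Q - P, ?_⟩
        rintro x (rfl | rfl | rfl)
        · exact ⟨0, by simp⟩
        · exact ⟨1, by simp⟩
        · by_cases h1 : Q.1 - P.1 ≠ 0
          · refine ⟨((f i).1 - P.1) / (Q.1 - P.1), ?_⟩
            refine Prod.ext_iff.mpr ⟨?_, ?_⟩ <;>
              simp only [Prod.smul_fst, Prod.smul_snd, Prod.fst_sub, Prod.snd_sub,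
                Prod.fst_vadd, Prod.snd_vadd, smul_eq_mul, vadd_eq_add, Prod.fst_add, Prod.snd_add] <;>
              field_simp <;> nlinarith [h2]
          · push_neg at h1
            have h1' : Q.2 - P.2 ≠ 0 := by
              intro hh
              exact hPQ (Prod.ext_iff.mpr ⟨by linarith, by linarith⟩).symm
            refine ⟨((f i).2 - P.2) / (Q.2 - P.2), ?_⟩
            refine Prod.ext_iff.mpr ⟨?_, ?_⟩ <;>
              simp only [Prod.smul_fst, Prod.smul_snd, Prod.fst_sub, Prod.snd_sub,
                Prod.fst_vadd, Prod.snd_vadd, smul_eq_mul, vadd_eq_add, Prod.fst_add, Prod.snd_add] <;>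
              field_simp <;> nlinarith [h2]
      rcases hcol.wbtw_or_wbtw_or_wbtw with h | h | h
      · exact hwbtw p i q hpq hiq h
      · exact hwbtw q p i hiq.symm hip.symm h
      · exact hwbtw i q p hip (Ne.symm hpq) h
    set S := {e : Fin (2 * s + 2) × Fin (2 * s + 2) | e.1 < e.2 ∧
        ¬(e = (p, q) ∨ e = (q, p)) ∧
        (openSegment ℝ (f e.1) (f e.2) ∩ openSegment ℝ (f p) (f q)).Nonempty} with hS
    have hkey : ∀ e ∈ S, L (f e.1) * L (f e.2) < 0 := by
      rintro ⟨a, b⟩ ⟨hab, hne, x, hx1, hx2⟩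
      obtain ⟨u, v, hu, hv, huv, hx⟩ := hx1
      obtain ⟨u', v', hu', hv', huv', hx'⟩ := hx2
      have hLx : L x = 0 := by
        rw [← hx', hLcomb _ _ _ _ huv', hLP, hLQ]; ring
      have hsum : u * L (f a) + v * L (f b) = 0 := by
        rw [← hLcomb _ _ _ _ huv, hx, hLx]
      have hone : L (f a) ≠ 0 ∨ L (f b) ≠ 0 := by
        rcases eq_or_ne a p with hap | hap
        · subst hap
          refine Or.inr (hnc b ?_ ?_)
          · exact fun hbp => absurd (hbp ▸ hab) (lt_irrefl _)
          · exact fun hbq => hne (Or.inl (by simp [hbq]))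
        rcases eq_or_ne a q with haq | haq
        · subst haq
          refine Or.inr (hnc b ?_ ?_)
          · exact fun hbp => hne (Or.inr (by simp [hbp]))
          · exact fun hbq => absurd (hbq ▸ hab) (lt_irrefl _)
        exact Or.inl (hnc a hap haq)
      have hLa : L (f a) ≠ 0 := by
        intro h0
        have hb0 : v * L (f b) = 0 := by rw [h0] at hsum; linarith
        have hLb0 : L (f b) = 0 := (mul_eq_zero.mp hb0).resolve_left (ne_of_gt hv)
        rcases hone with h | h
        · exact h h0
        · exact h hLb0
      have hLb : L (f b) ≠ 0 := by
        intro h0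
        have ha0 : u * L (f a) = 0 := by rw [h0] at hsum; linarith
        exact hLa ((mul_eq_zero.mp ha0).resolve_left (ne_of_gt hu))
      have h1 : u * L (f a) = -(v * L (f b)) := by linarith
      have hvb : v * L (f b) ≠ 0 := mul_ne_zero (ne_of_gt hv) hLb
      have h2 : (u * L (f a)) * (v * L (f b)) < 0 := by
        rw [h1]
        nlinarith [mul_self_pos.mpr hvb]
      nlinarith [mul_pos hu hv]
    set A : Finset (Fin (2 * s + 2)) := Finset.univ.filter (fun i => 0 < L (f i)) with hA
    set B : Finset (Fin (2 * s + 2)) := Finset.univ.filter (fun i => L (f i) < 0) with hB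
    set g : Fin (2 * s + 2) × Fin (2 * s + 2) → Fin (2 * s + 2) × Fin (2 * s + 2) :=
      fun e => if 0 < L (f e.1) then e else (e.2, e.1) with hg
    have himg : ∀ e ∈ S, g e ∈ (A ×ˢ B : Finset _) := by
      intro e he
      have hlt := hkey e he
      by_cases h : 0 < L (f e.1)
      · have hb : L (f e.2) < 0 := by nlinarith
        have hge : g e = e := if_pos h
        rw [hge, Finset.mem_product]
        exact ⟨Finset.mem_filter.mpr ⟨Finset.mem_univ _, h⟩,
          Finset.mem_filter.mpr ⟨Finset.mem_univ _, hb⟩⟩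
      · have ha : L (f e.1) < 0 := by
          rcases lt_or_eq_of_le (not_lt.mp h) with h' | h'
          · exact h'
          · exfalso; rw [h'] at hlt; simp at hlt
        have hb : 0 < L (f e.2) := by nlinarith
        have hge : g e = (e.2, e.1) := if_neg h
        rw [hge, Finset.mem_product]
        exact ⟨Finset.mem_filter.mpr ⟨Finset.mem_univ _, hb⟩,
          Finset.mem_filter.mpr ⟨Finset.mem_univ _, ha⟩⟩
    have hinjOn : Set.InjOn g S := by
      intro e he e' he' hee
      have h1 := he.1
      have h2 := he'.1
      simp only [hg] at hee
      split_ifs at hee with ha hb hb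
      · exact hee
      · rw [hee] at h1; simp only at h1; exact absurd h2 (lt_asymm h1)
      · rw [← hee] at h2; simp only at h2; exact absurd h2 (lt_asymm h1)
      · simp only [Prod.mk.injEq] at hee
        exact Prod.ext_iff.mpr ⟨hee.2, hee.1⟩
    have hcard : S.ncard ≤ A.card * B.card := by
      have h1 : S.ncard = (g '' S).ncard := (Set.ncard_image_of_injOn hinjOn).symm
      have h2 : (g '' S).ncard ≤
          (↑(A ×ˢ B) : Set (Fin (2 * s + 2) × Fin (2 * s + 2))).ncard := by
        apply Set.ncard_le_ncard _ (Set.toFinite _)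
        rintro y ⟨e, he, rfl⟩
        exact himg e he
      rw [h1]
      calc (g '' S).ncard ≤ _ := h2
        _ = (A ×ˢ B).card := Set.ncard_coe_finset _
        _ = A.card * B.card := Finset.card_product _ _
    have hABdisj : Disjoint A B := by
      rw [Finset.disjoint_left]
      intro i hiA hiB
      simp only [hA, hB, Finset.mem_filter] at hiA hiB
      exact absurd hiA.2 (lt_asymm hiB.2)
    have hsub : A ∪ B ⊆ Finset.univ \ ({p, q} : Finset (Fin (2 * s + 2))) := by
      intro i hi
      have hL0 : L (f i) ≠ 0 := by
        rcases Finset.mem_union.mp hi with h | h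
        · exact ne_of_gt (Finset.mem_filter.mp h).2
        · exact ne_of_lt (Finset.mem_filter.mp h).2
      simp only [Finset.mem_sdiff, Finset.mem_univ, true_and, Finset.mem_insert,
        Finset.mem_singleton]
      push_neg
      refine ⟨fun h => hL0 (by rw [h]; exact hLP), fun h => hL0 (by rw [h]; exact hLQ)⟩
    have hcard2 : (Finset.univ \ ({p, q} : Finset (Fin (2 * s + 2)))).card = 2 * s := by
      rw [Finset.card_sdiff_of_subset (Finset.subset_univ _), Finset.card_univ, Fintype.card_fin,
        Finset.card_pair hpq]
      omega
    have hAB : A.card + B.card ≤ 2 * s := by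
      rw [← Finset.card_union_of_disjoint hABdisj]
      calc (A ∪ B).card ≤ _ := Finset.card_le_card hsub
        _ = 2 * s := hcard2
    calc S.ncard ≤ A.card * B.card := hcard
      _ ≤ s ^ 2 := by
        have hZ : (A.card : ℤ) * (B.card : ℤ) ≤ (s : ℤ) ^ 2 := by
          have hABZ : (A.card : ℤ) + (B.card : ℤ) ≤ 2 * (s : ℤ) := by exact_mod_cast hAB
          nlinarith [sq_nonneg ((A.card : ℤ) - (B.card : ℤ))]
        exact_mod_cast hZ
  · -- arithmetic
    set l := n / (2 * s + 2) with hl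
    have hmpos : 0 < 2 * s + 2 := by omega
    have hmod := Nat.mod_lt n hmpos
    have hdm' : (2 * s + 2) * l + n % (2 * s + 2) = n := by
      rw [hl]; exact Nat.div_add_mod n (2 * s + 2)
    have hl1 : 1 ≤ l := by
      rw [hl]; exact (Nat.one_le_div_iff hmpos).mpr hmn
    have h2 : (2 * s + 2) * 1 ≤ (2 * s + 2) * l := Nat.mul_le_mul_left _ hl1
    have hnl : n ≤ 2 * (l * (2 * s + 2)) := by nlinarith
    have hc : (2 * s + 2).choose 2 = (s + 1) * (2 * s + 1) := by
      rw [Nat.choose_two_right]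
      rw [show 2 * s + 2 - 1 = 2 * s + 1 by omega,
        show (2 * s + 2) * (2 * s + 1) = 2 * ((s + 1) * (2 * s + 1)) by ring,
        Nat.mul_div_cancel_left _ two_pos]
    have hstep : n * (s + 1) ≤ 2 * (l * (2 * s + 2)) * (s + 1) :=
      Nat.mul_le_mul_right _ hnl
    have hstep2 : 2 * (l * (2 * s + 2)) * (s + 1) ≤ 8 * (l * ((s + 1) * (2 * s + 1))) := by
      rw [show 2 * (l * (2 * s + 2)) * (s + 1) = l * (s + 1) * (4 * s + 4) by ring,
        show 8 * (l * ((s + 1) * (2 * s + 1))) = l * (s + 1) * (16 * s + 8) by ring]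
      exact Nat.mul_le_mul le_rfl (by omega)
    have hnat : n * (s + 1) ≤ 8 * (l * ((2 * s + 2).choose 2)) := by
      rw [hc]; exact hstep.trans hstep2
    have h0 : k ≤ (s + 1) * (s + 1) := (Nat.lt_succ_sqrt k).le
    have hsq : Real.sqrt k ≤ (s : ℝ) + 1 := by
      have h1 : (k : ℝ) ≤ ((s : ℝ) + 1) ^ 2 := by rw [sq]; exact_mod_cast h0
      calc Real.sqrt k ≤ Real.sqrt (((s:ℝ) + 1) ^ 2) := Real.sqrt_le_sqrt h1
        _ = (s : ℝ) + 1 := Real.sqrt_sq (by positivity)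
    have hnatR : (n : ℝ) * ((s : ℝ) + 1) ≤ 8 * ((l : ℝ) * (((2 * s + 2).choose 2 : ℕ) : ℝ)) := by
      exact_mod_cast hnat
    have hn0 : (0 : ℝ) ≤ n := Nat.cast_nonneg n
    have hfin : (n : ℝ) * Real.sqrt k ≤ (n : ℝ) * ((s : ℝ) + 1) :=
      mul_le_mul_of_nonneg_left hsq hn0
    linarith
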